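/- For positive integers m and n, the number of permutations of [m+n] whose excedance set is exactly {1,...,m} equals the sum over i from 1 to n of (-1)^(n-i) * i! * i^m * S(n,i), where S(n,i) denotes the Stirling number of the second kind. -/

import Mathlib

/-- A permutation of `[N] = {1,…,N}`, encoded as a function `ℕ → ℕ` that is a
bijection of `{1,…,N}` onto itself and is the identity elsewhere. -/
def PermOn (N : ℕ) (π : ℕ → ℕ) : Prop :=
  Set.BijOn π (Set.Icc 1 N) (Set.Icc 1 N) ∧ ∀ i, i ∉ Set.Icc 1 N → π i = i

/-- The excedance set of a permutation of `[N]`: positions `i ∈ [N]` with `π i > i`. -/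
def ExcSet (N : ℕ) (π : ℕ → ℕ) : Set ℕ := {i | i ∈ Set.Icc 1 N ∧ i < π i}

/-- Stirling numbers of the second kind. -/
def stirling : ℕ → ℕ → ℕ
  | 0, 0 => 1
  | 0, _ + 1 => 0
  | _ + 1, 0 => 0
  | n + 1, k + 1 => (k + 1) * stirling n (k + 1) + stirling n k

set_option maxHeartbeats 1000000

open Equiv Finset
open scoped Nat


open Equiv Finset

def PC (N m j : ℕ) (σ : Equiv.Perm (Fin N)) : Prop :=
  ∀ i : Fin N, ((i : ℕ) < m → (i : ℕ) < (σ i : ℕ)) ∧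
    (m ≤ (i : ℕ) → (i : ℕ) < m + j → (σ i : ℕ) ≤ (i : ℕ))

noncomputable def pcard (N m j : ℕ) : ℕ := Nat.card {σ : Equiv.Perm (Fin N) // PC N m j σ}

lemma succAbove_val {M : ℕ} (p : Fin (M + 1)) (i : Fin M) :
    ((p.succAbove i : Fin (M + 1)) : ℕ) = if (i : ℕ) < (p : ℕ) then (i : ℕ) else (i : ℕ) + 1 := by
  rcases lt_or_ge ((i : ℕ)) ((p : ℕ)) with h | h
  · rw [Fin.succAbove_of_castSucc_lt p i (by simpa [Fin.lt_def] using h), if_pos h]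
    simp
  · rw [Fin.succAbove_of_le_castSucc p i (by simpa [Fin.le_def] using h),
      if_neg (by omega)]
    simp

noncomputable def core {M : ℕ} (q : Fin (M + 1)) (σ : Equiv.Perm (Fin (M + 1))) :
    Equiv.Perm (Fin M) :=
  Equiv.removeNone ((finSuccEquiv' q).symm.trans (σ.trans (finSuccEquiv' (σ q))))

lemma core_spec {M : ℕ} (q : Fin (M + 1)) (σ : Equiv.Perm (Fin (M + 1))) (i : Fin M) :
    σ (q.succAbove i) = (σ q).succAbove (core q σ i) := by
  have hne : σ (q.succAbove i) ≠ σ q := fun h => Fin.succAbove_ne q i (σ.injective h)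
  obtain ⟨i', hi'⟩ := Fin.exists_succAbove_eq hne
  have h1 : ((finSuccEquiv' q).symm.trans (σ.trans (finSuccEquiv' (σ q)))) (some i) = some i' := by
    simp only [Equiv.trans_apply, finSuccEquiv'_symm_some, ← hi', finSuccEquiv'_succAbove]
  have h2 := Equiv.removeNone_some _ ⟨i', h1⟩
  rw [h1] at h2
  have h3 : core q σ i = i' := Option.some_injective _ h2
  rw [h3, hi']

def build {M : ℕ} (q v : Fin (M + 1)) (τ : Equiv.Perm (Fin M)) : Equiv.Perm (Fin (M + 1)) :=
  (finSuccEquiv' q).trans ((Equiv.optionCongr τ).trans (finSuccEquiv' v).symm)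

@[simp] lemma build_at {M : ℕ} (q v : Fin (M + 1)) (τ : Equiv.Perm (Fin M)) :
    build q v τ q = v := by
  simp [build, Equiv.trans_apply, finSuccEquiv'_at, finSuccEquiv'_symm_none]

@[simp] lemma build_succAbove {M : ℕ} (q v : Fin (M + 1)) (τ : Equiv.Perm (Fin M)) (i : Fin M) :
    build q v τ (q.succAbove i) = v.succAbove (τ i) := by
  simp [build, Equiv.trans_apply, finSuccEquiv'_succAbove, finSuccEquiv'_symm_some]

lemma core_build {M : ℕ} (q v : Fin (M + 1)) (τ : Equiv.Perm (Fin M)) :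
    core q (build q v τ) = τ := by
  apply Equiv.ext; intro i
  have h1 := core_spec q (build q v τ) i
  rw [build_succAbove, build_at] at h1
  exact (Fin.succAbove_right_injective h1).symm

lemma pc_transfer {M m j : ℕ} (hq : m + j ≤ M) (σ : Equiv.Perm (Fin (M + 1)))
    (hvq : m + j < ((σ ⟨m + j, by omega⟩ : Fin (M + 1)) : ℕ)) :
    PC (M + 1) m j σ ↔ PC M m j (core ⟨m + j, by omega⟩ σ) := by
  set q : Fin (M + 1) := ⟨m + j, by omega⟩ with hqdef
  have hvq' : m + j < ((σ q : Fin (M+1)) : ℕ) := hvq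
  have hspec : ∀ i : Fin M, ((σ (q.succAbove i) : Fin (M + 1)) : ℕ) =
      if ((core q σ i : Fin M) : ℕ) < ((σ q : Fin (M+1)) : ℕ)
        then ((core q σ i : Fin M) : ℕ) else ((core q σ i : Fin M) : ℕ) + 1 := by
    intro i; rw [core_spec q σ i]; exact succAbove_val _ _
  have hsv : ∀ i : Fin M, ((q.succAbove i : Fin (M + 1)) : ℕ) =
      if (i : ℕ) < m + j then (i : ℕ) else (i : ℕ) + 1 := fun i => succAbove_val _ _
  constructor
  · intro hσ i
    have h2 := hspec i
    have h3 := hsv i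
    have hiM := i.isLt
    constructor
    · intro him
      have h4 : ((q.succAbove i : Fin (M + 1)) : ℕ) = (i : ℕ) := by rw [h3, if_pos (by omega)]
      have h5 := (hσ (q.succAbove i)).1 (by omega)
      rw [h4] at h5
      rcases lt_or_ge ((core q σ i : Fin M) : ℕ) ((σ q : Fin (M+1)) : ℕ) with h | h
      · rw [if_pos h] at h2; omega
      · omega
    · intro hm hij
      have h4 : ((q.succAbove i : Fin (M + 1)) : ℕ) = (i : ℕ) := by rw [h3, if_pos (by omega)]
      have h5 := (hσ (q.succAbove i)).2 (by omega) (by omega)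
      rw [h4] at h5
      rcases lt_or_ge ((core q σ i : Fin M) : ℕ) ((σ q : Fin (M+1)) : ℕ) with h | h
      · rw [if_pos h] at h2; omega
      · rw [if_neg (by omega)] at h2; omega
  · intro hτ i
    constructor
    · intro him
      have hiM : (i : ℕ) < M := by omega
      have h4 : q.succAbove ⟨(i : ℕ), hiM⟩ = i := by
        apply Fin.ext; rw [hsv ⟨(i : ℕ), hiM⟩, if_pos (by simpa using by omega)]
      have h2 := hspec ⟨(i : ℕ), hiM⟩
      have h6 := (hτ ⟨(i : ℕ), hiM⟩).1 (by simpa using him)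
      rw [h4] at h2
      rcases lt_or_ge ((core q σ ⟨(i : ℕ), hiM⟩ : Fin M) : ℕ) ((σ q : Fin (M+1)) : ℕ) with h | h
      · rw [if_pos h] at h2; simp only [] at h6 ⊢; omega
      · rw [if_neg (by omega)] at h2; simp only [] at h6 ⊢; omega
    · intro hm hij
      have hiM : (i : ℕ) < M := by omega
      have h4 : q.succAbove ⟨(i : ℕ), hiM⟩ = i := by
        apply Fin.ext; rw [hsv ⟨(i : ℕ), hiM⟩, if_pos (by simpa using by omega)]
      have h2 := hspec ⟨(i : ℕ), hiM⟩
      have h6 := (hτ ⟨(i : ℕ), hiM⟩).2 (by simpa using hm) (by simpa using hij)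
      rw [h4] at h2
      rcases lt_or_ge ((core q σ ⟨(i : ℕ), hiM⟩ : Fin M) : ℕ) ((σ q : Fin (M+1)) : ℕ) with h | h
      · rw [if_pos h] at h2; simp only [] at h6 ⊢; omega
      · rw [if_neg (by omega)] at h2; simp only [] at h6 ⊢; omega

lemma build_core {M : ℕ} (q v : Fin (M + 1)) (σ : Equiv.Perm (Fin (M + 1))) (hv : v = σ q) :
    build q v (core q σ) = σ := by
  subst hv
  apply Equiv.ext
  intro z
  rcases eq_or_ne z q with rfl | hz
  · rw [build_at]
  · obtain ⟨i, rfl⟩ := Fin.exists_succAbove_eq hz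
    rw [build_succAbove, ← core_spec]

set_option maxHeartbeats 1000000 in
noncomputable def fiberEquiv (M m j : ℕ) (h : m + j ≤ M) :
    {σ : Equiv.Perm (Fin (M + 1)) //
        PC (M + 1) m j σ ∧ m + j < ((σ ⟨m + j, by omega⟩ : Fin (M + 1)) : ℕ)} ≃
      Fin (M - (m + j)) × {τ : Equiv.Perm (Fin M) // PC M m j τ} where
  toFun x := ⟨⟨((x.1 ⟨m + j, by omega⟩ : Fin (M + 1)) : ℕ) - (m + j) - 1, by
      have h1 := (x.1 ⟨m + j, by omega⟩).isLt
      have h2 := x.2.2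
      omega⟩,
    ⟨core ⟨m + j, by omega⟩ x.1, (pc_transfer h x.1 x.2.2).mp x.2.1⟩⟩
  invFun y := ⟨build ⟨m + j, by omega⟩ ⟨m + j + 1 + (y.1 : ℕ), by have := y.1.isLt; omega⟩ y.2.1,
    by
      have hgt : m + j <
          ((build (⟨m + j, by omega⟩ : Fin (M+1)) ⟨m + j + 1 + (y.1 : ℕ), by have := y.1.isLt; omega⟩
            y.2.1 ⟨m + j, by omega⟩ : Fin (M + 1)) : ℕ) := by
        rw [build_at]; simp; omega
      refine ⟨(pc_transfer h _ hgt).mpr ?_, hgt⟩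
      rw [core_build]
      exact y.2.2⟩
  left_inv x := by
    rcases x with ⟨σ, hσ, hlt⟩
    apply Subtype.ext
    dsimp only
    apply build_core
    apply Fin.ext
    dsimp only
    have h1 := (σ (⟨m + j, by omega⟩ : Fin (M + 1))).isLt
    omega
  right_inv y := by
    rcases y with ⟨k, τ, hτ⟩
    have hba := build_at (⟨m + j, by omega⟩ : Fin (M+1))
      (⟨m + j + 1 + (k : ℕ), by have := k.isLt; omega⟩ : Fin (M+1)) τ
    refine Prod.ext (Fin.ext ?_) (Subtype.ext ?_) <;> dsimp only
    · rw [hba]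
      dsimp only
      omega
    · exact core_build _ _ _

open scoped Classical in
noncomputable def subtypeSplit {α : Type*} (P Q : α → Prop) :
    {x // P x} ≃ {x : α // P x ∧ Q x} ⊕ {x : α // P x ∧ ¬ Q x} where
  toFun x := if h : Q x.1 then Sum.inl ⟨x.1, x.2, h⟩ else Sum.inr ⟨x.1, x.2, h⟩
  invFun := Sum.elim (fun x => ⟨x.1, x.2.1⟩) (fun x => ⟨x.1, x.2.1⟩)
  left_inv x := by by_cases h : Q x.1 <;> simp [h]
  right_inv x := by rcases x with ⟨x, hx, h⟩ | ⟨x, hx, h⟩ <;> simp [h]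

lemma card_fin' (k : ℕ) : Nat.card (Fin k) = k :=
  Nat.card_eq_fintype_card.trans (Fintype.card_fin _)

lemma pcard_split (M m j : ℕ) (h : m + j ≤ M) :
    pcard (M + 1) m j = pcard (M + 1) m (j + 1) + (M - (m + j)) * pcard M m j := by
  have e0 := subtypeSplit (PC (M + 1) m j)
    (fun σ => m + j < ((σ ⟨m + j, by omega⟩ : Fin (M + 1)) : ℕ))
  have hcards : pcard (M + 1) m j =
      Nat.card {σ : Equiv.Perm (Fin (M + 1)) //
        PC (M + 1) m j σ ∧ m + j < ((σ ⟨m + j, by omega⟩ : Fin (M + 1)) : ℕ)} +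
      Nat.card {σ : Equiv.Perm (Fin (M + 1)) //
        PC (M + 1) m j σ ∧ ¬ (m + j < ((σ ⟨m + j, by omega⟩ : Fin (M + 1)) : ℕ))} := by
    rw [pcard, Nat.card_congr e0, Nat.card_sum]
  have hA : Nat.card {σ : Equiv.Perm (Fin (M + 1)) //
      PC (M + 1) m j σ ∧ m + j < ((σ ⟨m + j, by omega⟩ : Fin (M + 1)) : ℕ)}
      = (M - (m + j)) * pcard M m j := by
    rw [Nat.card_congr (fiberEquiv M m j h), Nat.card_prod, card_fin']
    rfl
  have hB : Nat.card {σ : Equiv.Perm (Fin (M + 1)) //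
      PC (M + 1) m j σ ∧ ¬ (m + j < ((σ ⟨m + j, by omega⟩ : Fin (M + 1)) : ℕ))}
      = pcard (M + 1) m (j + 1) := by
    rw [pcard]
    apply Nat.card_congr
    apply Equiv.subtypeEquivRight
    intro σ
    constructor
    · rintro ⟨h1, h2⟩ i
      refine ⟨(h1 i).1, fun hm hij => ?_⟩
      by_cases hlt : (i : ℕ) < m + j
      · exact (h1 i).2 hm hlt
      · have hie : i = (⟨m + j, by omega⟩ : Fin (M + 1)) := by
          apply Fin.ext; dsimp only; omega
        rw [hie]
        dsimp only at h2 ⊢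
        omega
    · intro h1
      refine ⟨fun i => ⟨(h1 i).1, fun hm hij => (h1 i).2 hm (by omega)⟩, ?_⟩
      have := (h1 ⟨m + j, by omega⟩).2 (by dsimp only; omega) (by dsimp only; omega)
      dsimp only at this ⊢
      omega
  omega

lemma pcard_head (M m : ℕ) (h : m ≤ M) :
    pcard (M + 1) (m + 1) 0 = (M - m) * pcard M m 0 := by
  have hiff : ∀ σ : Equiv.Perm (Fin (M + 1)), PC (M + 1) (m + 1) 0 σ ↔
      (PC (M + 1) m 0 σ ∧ m + 0 < ((σ ⟨m + 0, by omega⟩ : Fin (M + 1)) : ℕ)) := by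
    intro σ
    constructor
    · intro h1
      refine ⟨fun i => ⟨fun him => (h1 i).1 (by omega), fun hm hij => by omega⟩, ?_⟩
      have := (h1 ⟨m + 0, by omega⟩).1 (by dsimp only; omega)
      dsimp only at this ⊢
      omega
    · rintro ⟨h1, h2⟩ i
      refine ⟨fun him => ?_, fun hm hij => by omega⟩
      by_cases hlt : (i : ℕ) < m
      · exact (h1 i).1 hlt
      · have hie : i = (⟨m + 0, by omega⟩ : Fin (M + 1)) := by
          apply Fin.ext; dsimp only; omega
        rw [hie]
        dsimp only at h2 ⊢
        omega
  rw [pcard, Nat.card_congr (Equiv.subtypeEquivRight hiff),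
    Nat.card_congr (fiberEquiv M m 0 (by omega)), Nat.card_prod, card_fin']
  rfl

lemma pcard_zero (N : ℕ) : pcard N 0 0 = N ! := by
  have htriv : ∀ σ : Equiv.Perm (Fin N), PC N 0 0 σ := by
    intro σ i
    exact ⟨fun h => absurd h (by omega), fun h1 h2 => by omega⟩
  rw [pcard, Nat.card_congr (Equiv.subtypeUnivEquiv htriv), Nat.card_eq_fintype_card,
    Fintype.card_perm, Fintype.card_fin]

lemma pcard_base (m u : ℕ) : pcard (m + u) m 0 = u ! * u ^ m := by
  induction m with
  | zero => simpa using pcard_zero u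
  | succ m ih =>
    have h1 : m + 1 + u = (m + u) + 1 := by omega
    have h2 : m + u - m = u := by omega
    rw [h1, pcard_head (m + u) m (Nat.le_add_right _ _), ih, h2, pow_succ]
    ring

def Dh : ℕ → ℕ → ℕ → ℕ
  | 0, _, _ => 1
  | p + 1, u, 0 => u * Dh p u 0
  | p + 1, u, i + 1 => Dh (p + 1) (u + 1) i + u * Dh p u (i + 1)
termination_by p _ i => (p, i)

lemma Dh_zero (u i : ℕ) : Dh 0 u i = 1 := by cases i <;> simp [Dh]

lemma Dh_succ_zero (p u : ℕ) : Dh (p + 1) u 0 = u * Dh p u 0 := by simp [Dh]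

lemma Dh_succ_succ (p u i : ℕ) :
    Dh (p + 1) u (i + 1) = Dh (p + 1) (u + 1) i + u * Dh p u (i + 1) := by simp [Dh]

lemma Dh_base (p u : ℕ) : Dh p u 0 = u ^ p := by
  induction p with
  | zero => rw [Dh_zero, pow_zero]
  | succ p ih => rw [Dh_succ_zero, ih, pow_succ]; ring

lemma Dh_sub (p : ℕ) : ∀ u : ℕ, Dh p u 1 + u ^ (p + 1) = (u + 1) ^ (p + 1) := by
  induction p with
  | zero => intro u; rw [Dh_zero]; ring
  | succ p ih =>
    intro u
    rw [Dh_succ_succ, Dh_base]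
    have h := ih u
    have : (u + 1) ^ (p + 1 + 1) = (u + 1) ^ (p + 1) + u * ((u + 1) ^ (p + 1)) := by ring
    rw [this, ← h]
    ring

lemma Dh_last : ∀ i p u : ℕ, Dh (p + 1) u (i + 1) = (u + i + 1) * Dh p u (i + 1) + Dh (p + 1) u i := by
  intro i
  induction i with
  | zero =>
    intro p u
    rw [Dh_succ_succ, Dh_base, Dh_succ_zero, Dh_base]
    have h := Dh_sub p u
    have h2 : (u + 1) ^ (p + 1) = Dh p u 1 + u ^ (p + 1) := h.symm
    rw [h2]
    ring
  | succ i ihi =>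
    intro p
    induction p with
    | zero =>
      intro u
      have h1 := Dh_succ_succ 0 u (i + 1)
      have h2 := ihi 0 (u + 1)
      have h3 := Dh_succ_succ 0 u i
      simp only [Dh_zero] at h1 h2 h3 ⊢
      zify at h1 h2 h3 ⊢
      linear_combination h1 + h2 - h3
    | succ p ihp =>
      intro u
      have h1 := Dh_succ_succ (p + 1) u (i + 1)
      have h2 := ihi (p + 1) (u + 1)
      have h3 := Dh_succ_succ (p + 1) u i
      have h4 := Dh_succ_succ p u (i + 1)
      have hp := ihp u
      zify at h1 h2 h3 h4 hp ⊢
      linear_combination h1 + h2 - h3 - ((u : ℤ) + i + 2) * h4 + (u : ℤ) * hp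

lemma stirling_eq_zero : ∀ n k : ℕ, n < k → stirling n k = 0 := by
  intro n
  induction n with
  | zero => intro k hk; match k, hk with | k + 1, _ => rfl
  | succ n ih =>
    intro k hk
    match k, hk with
    | k + 1, hk =>
      show (k + 1) * stirling n (k + 1) + stirling n k = 0
      rw [ih (k + 1) (by omega), ih k (by omega)]
      ring

lemma stirling_self : ∀ n : ℕ, stirling n n = 1 := by
  intro n
  induction n with
  | zero => rfl
  | succ n ih =>
    show (n + 1) * stirling n (n + 1) + stirling n n = 1
    rw [stirling_eq_zero n (n + 1) (by omega), ih]
    ring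

lemma stirling_Dh : ∀ p i : ℕ, stirling (p + i) i = Dh p 0 i := by
  intro p
  induction p with
  | zero =>
    intro i
    rw [Nat.zero_add, stirling_self, Dh_zero]
  | succ p ihp =>
    intro i
    induction i with
    | zero => rw [Dh_base]; rfl
    | succ i ihi =>
      show (i + 1) * stirling (p + 1 + i) (i + 1) + stirling (p + 1 + i) i = Dh (p + 1) 0 (i + 1)
      rw [Dh_last i p 0]
      have e1 : p + 1 + i = p + (i + 1) := by omega
      rw [e1, ihp (i + 1)]
      have e2 : p + (i + 1) = (p + 1) + i := by omega
      rw [e2, ihi]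
      ring

def Tm (m j u : ℕ) (i : ℕ) : ℤ :=
  (-1 : ℤ) ^ i * ((u + i)! : ℤ) * ((u + i : ℕ) : ℤ) ^ m * (Dh (j - i) u i : ℤ)

lemma sumStep (m j u : ℕ) :
    ∑ i ∈ Finset.range (j + 2), Tm m (j + 1) u i
      = -(∑ i ∈ Finset.range (j + 1), Tm m j (u + 1) i)
        + u * ∑ i ∈ Finset.range (j + 1), Tm m j u i := by
  have hterm : ∀ i ∈ Finset.range j,
      Tm m (j + 1) u (i + 1) = -(Tm m j (u + 1) i) + u * Tm m j u (i + 1) := by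
    intro i hi
    have hij : i < j := Finset.mem_range.mp hi
    obtain ⟨p, hp⟩ : ∃ p, j - i = p + 1 := ⟨j - i - 1, by omega⟩
    have e1 : j + 1 - (i + 1) = p + 1 := by omega
    have e2 : j - (i + 1) = p := by omega
    have e3 : u + (i + 1) = u + 1 + i := by omega
    rw [Tm, Tm, Tm, e1, hp, e2, e3, Dh_succ_succ]
    push_cast
    ring
  have hj : Tm m (j + 1) u (j + 1) = -(Tm m j (u + 1) j) := by
    have e1 : j + 1 - (j + 1) = 0 := by omega
    have e2 : j - j = 0 := by omega
    have e3 : u + (j + 1) = u + 1 + j := by omega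
    rw [Tm, Tm, e1, e2, e3, Dh_zero, Dh_zero]
    push_cast
    ring
  have h0 : Tm m (j + 1) u 0 = u * Tm m j u 0 := by
    have e1 : j + 1 - 0 = j + 1 := by omega
    have e2 : j - 0 = j := by omega
    rw [Tm, Tm, e1, e2, Dh_succ_zero]
    push_cast
    ring
  rw [Finset.sum_range_succ' (Tm m (j + 1) u) (j + 1),
    Finset.sum_range_succ (fun i => Tm m (j + 1) u (i + 1)) j,
    Finset.sum_range_succ (Tm m j (u + 1)) j,
    Finset.sum_range_succ' (Tm m j u) j,
    Finset.sum_congr rfl hterm, hj, h0,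
    Finset.sum_add_distrib]
  rw [← Finset.mul_sum]
  have hneg : ∑ i ∈ Finset.range j, -(Tm m j (u + 1) i)
      = -(∑ i ∈ Finset.range j, Tm m j (u + 1) i) := by
    rw [Finset.sum_neg_distrib]
  rw [hneg]
  ring

lemma mainAlg (m : ℕ) : ∀ j u : ℕ, ((-1 : ℤ)) ^ j * pcard (m + j + u) m j =
    ∑ i ∈ Finset.range (j + 1), Tm m j u i := by
  intro j
  induction j with
  | zero =>
    intro u
    rw [Finset.sum_range_one]
    simp only [Tm, Nat.add_zero, pow_zero, one_mul, Nat.sub_zero, Dh_zero, Nat.cast_one, mul_one]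
    rw [pcard_base]
    push_cast
    ring
  | succ j ih =>
    intro u
    have hsplit := pcard_split (m + j + u) m j (by omega)
    have hred : m + j + u - (m + j) = u := by omega
    rw [hred] at hsplit
    have harg1 : m + (j + 1) + u = m + j + u + 1 := by omega
    have harg2 : m + j + (u + 1) = m + j + u + 1 := by omega
    have ih1 := ih (u + 1)
    have ih2 := ih u
    rw [harg2] at ih1
    rw [harg1]
    have hcast : (pcard (m + j + u + 1) m (j + 1) : ℤ)
        = (pcard (m + j + u + 1) m j : ℤ) - u * pcard (m + j + u) m j := by
      rw [hsplit]; push_cast; ring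
    calc ((-1 : ℤ)) ^ (j + 1) * pcard (m + j + u + 1) m (j + 1)
        = -(((-1 : ℤ)) ^ j * pcard (m + j + u + 1) m j)
          + u * (((-1 : ℤ)) ^ j * pcard (m + j + u) m j) := by rw [hcast]; ring
      _ = -(∑ i ∈ Finset.range (j + 1), Tm m j (u + 1) i)
          + u * ∑ i ∈ Finset.range (j + 1), Tm m j u i := by rw [ih1, ih2]
      _ = ∑ i ∈ Finset.range (j + 2), Tm m (j + 1) u i := (sumStep m j u).symm

lemma PermOn.memIcc {N : ℕ} {π : ℕ → ℕ} (h : PermOn N π) {x : ℕ} (h1 : 1 ≤ x) (h2 : x ≤ N) :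
    1 ≤ π x ∧ π x ≤ N := by
  have := h.1.mapsTo (Set.mem_Icc.mpr ⟨h1, h2⟩)
  exact Set.mem_Icc.mp this

noncomputable def fwd {N : ℕ} (π : ℕ → ℕ) (hπ : PermOn N π) : Equiv.Perm (Fin N) := by
  refine Equiv.ofBijective (fun i => ⟨π (i + 1) - 1, ?_⟩) ?_
  · have h := hπ.memIcc (x := (i : ℕ) + 1) (by omega) (by have := i.isLt; omega)
    omega
  · apply Finite.injective_iff_bijective.mp
    intro a b hab
    have ha := hπ.memIcc (x := (a : ℕ) + 1) (by omega) (by have := a.isLt; omega)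
    have hb := hπ.memIcc (x := (b : ℕ) + 1) (by omega) (by have := b.isLt; omega)
    have hval : π ((a : ℕ) + 1) - 1 = π ((b : ℕ) + 1) - 1 := congrArg Fin.val hab
    have hval2 : π ((a : ℕ) + 1) = π ((b : ℕ) + 1) := by omega
    have := hπ.1.injOn (Set.mem_Icc.mpr ⟨by omega, by have := a.isLt; omega⟩)
      (Set.mem_Icc.mpr ⟨by omega, by have := b.isLt; omega⟩) hval2
    apply Fin.ext
    omega

lemma fwd_val {N : ℕ} (π : ℕ → ℕ) (hπ : PermOn N π) (i : Fin N) :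
    ((fwd π hπ i : Fin N) : ℕ) = π ((i : ℕ) + 1) - 1 := by
  rw [fwd, Equiv.ofBijective_apply]

noncomputable def bwd (N : ℕ) (σ : Equiv.Perm (Fin N)) : ℕ → ℕ :=
  fun x => if h : 1 ≤ x ∧ x ≤ N then ((σ ⟨x - 1, by omega⟩ : Fin N) : ℕ) + 1 else x

lemma bwd_permOn (N : ℕ) (σ : Equiv.Perm (Fin N)) : PermOn N (bwd N σ) := by
  constructor
  · refine ⟨?_, ?_, ?_⟩
    · intro x hx
      rw [Set.mem_Icc] at hx ⊢
      rw [bwd, dif_pos hx]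
      have := (σ ⟨x - 1, by omega⟩).isLt
      omega
    · intro x hx y hy hxy
      rw [Set.mem_Icc] at hx hy
      rw [bwd, dif_pos hx, bwd, dif_pos hy] at hxy
      have hfin : (σ ⟨x - 1, by omega⟩ : Fin N) = σ ⟨y - 1, by omega⟩ := Fin.ext (by omega)
      have := σ.injective hfin
      have hval : x - 1 = y - 1 := congrArg Fin.val this
      omega
    · intro y hy
      rw [Set.mem_Icc] at hy
      refine ⟨((σ.symm ⟨y - 1, by omega⟩ : Fin N) : ℕ) + 1, ?_, ?_⟩
      · rw [Set.mem_Icc]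
        have := (σ.symm ⟨y - 1, by omega⟩).isLt
        omega
      · rw [bwd, dif_pos ⟨by omega, by have := (σ.symm ⟨y - 1, by omega⟩).isLt; omega⟩]
        have hmk : (⟨(σ.symm ⟨y - 1, by omega⟩ : ℕ) + 1 - 1, by
            have := (σ.symm (⟨y - 1, by omega⟩ : Fin N)).isLt; omega⟩ : Fin N)
            = σ.symm ⟨y - 1, by omega⟩ := Fin.ext (by simp)
        rw [hmk, Equiv.apply_symm_apply]
        dsimp only
        omega
  · intro x hx
    rw [Set.mem_Icc] at hx
    rw [bwd, dif_neg (by omega)]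

lemma bwd_excSet {m n : ℕ} (σ : Equiv.Perm (Fin (m + n))) (hσ : PC (m + n) m n σ) :
    ExcSet (m + n) (bwd (m + n) σ) = Set.Icc 1 m := by
  ext x
  rw [ExcSet, Set.mem_setOf_eq, Set.mem_Icc, Set.mem_Icc]
  by_cases hx : 1 ≤ x ∧ x ≤ m + n
  · have hb : bwd (m + n) σ x = ((σ ⟨x - 1, by omega⟩ : Fin (m + n)) : ℕ) + 1 := by
      rw [bwd, dif_pos hx]
    rw [hb]
    have hpc := hσ ⟨x - 1, by omega⟩
    have h1 := hpc.1
    have h2 := hpc.2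
    dsimp only at h1 h2
    constructor
    · rintro ⟨-, hlt⟩
      constructor
      · omega
      · by_contra hgt
        have := h2 (by omega) (by omega)
        omega
    · rintro ⟨h1x, hxm⟩
      have := h1 (by omega)
      exact ⟨⟨by omega, by omega⟩, by omega⟩
  · have hb : bwd (m + n) σ x = x := by rw [bwd, dif_neg hx]
    rw [hb]
    constructor
    · rintro ⟨-, hlt⟩
      omega
    · rintro ⟨h1x, hxm⟩
      exfalso
      omega

lemma fwd_pc {m n : ℕ} (π : ℕ → ℕ) (hπ : PermOn (m + n) π)
    (hexc : ExcSet (m + n) π = Set.Icc 1 m) : PC (m + n) m n (fwd π hπ) := by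
  have hiff : ∀ x, (x ∈ Set.Icc 1 (m + n) ∧ x < π x) ↔ x ∈ Set.Icc 1 m := by
    intro x
    rw [← hexc]
    rfl
  intro i
  have hlt := i.isLt
  have hmem := hπ.memIcc (x := (i : ℕ) + 1) (by omega) (by omega)
  have hmx := hiff ((i : ℕ) + 1)
  rw [Set.mem_Icc, Set.mem_Icc] at hmx
  rw [fwd_val]
  constructor
  · intro him
    have := hmx.mpr ⟨by omega, by omega⟩
    omega
  · intro hm hij
    by_contra hgt
    have := hmx.mp ⟨⟨by omega, by omega⟩, by omega⟩
    omega

noncomputable def outerEquiv (m n : ℕ) :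
    {π : ℕ → ℕ // PermOn (m + n) π ∧ ExcSet (m + n) π = Set.Icc 1 m} ≃
      {σ : Equiv.Perm (Fin (m + n)) // PC (m + n) m n σ} where
  toFun x := ⟨fwd x.1 x.2.1, fwd_pc x.1 x.2.1 x.2.2⟩
  invFun y := ⟨bwd (m + n) y.1, bwd_permOn (m + n) y.1, bwd_excSet y.1 y.2⟩
  left_inv x := by
    rcases x with ⟨π, hπ, hexc⟩
    apply Subtype.ext
    dsimp only
    funext z
    by_cases hz : 1 ≤ z ∧ z ≤ m + n
    · rw [bwd, dif_pos hz, fwd_val]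
      have h1 : z - 1 + 1 = z := by omega
      rw [h1]
      have := hπ.memIcc (x := z) (by omega) (by omega)
      omega
    · rw [bwd, dif_neg hz]
      exact (hπ.2 z (by rw [Set.mem_Icc]; omega)).symm
  right_inv y := by
    rcases y with ⟨σ, hσ⟩
    apply Subtype.ext
    dsimp only
    apply Equiv.ext
    intro i
    apply Fin.ext
    have hlt := i.isLt
    have hcond : 1 ≤ (i : ℕ) + 1 ∧ (i : ℕ) + 1 ≤ m + n := ⟨by omega, by omega⟩
    rw [fwd_val, bwd, dif_pos hcond]
    have hmk : (⟨(i : ℕ) + 1 - 1, by omega⟩ : Fin (m + n)) = i := Fin.ext (by dsimp only; omega)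
    rw [hmk]
    omega


theorem number_of_perms_with_excedance_set_initial_segment (m n : ℕ)
    (hm : 1 ≤ m) (hn : 1 ≤ n) :
    (Nat.card {π : ℕ → ℕ // PermOn (m + n) π ∧ ExcSet (m + n) π = Set.Icc 1 m} : ℤ) =
      ∑ i ∈ Finset.Icc 1 n,
        (-1 : ℤ) ^ (n - i) * (Nat.factorial i : ℤ) * (i : ℤ) ^ m * (stirling n i : ℤ) := by
  have hcard : Nat.card {π : ℕ → ℕ // PermOn (m + n) π ∧ ExcSet (m + n) π = Set.Icc 1 m}
      = pcard (m + n) m n := by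
    rw [pcard]
    exact Nat.card_congr (outerEquiv m n)
  rw [hcard]
  have halg := mainAlg m n 0
  -- (-1)^n * pcard (m + n + 0) m n = ∑ i in range (n+1), Tm m n 0 i
  rw [Nat.add_zero] at halg
  have hsq : ((-1 : ℤ)) ^ n * ((-1 : ℤ)) ^ n = 1 := by
    rw [← pow_add]
    exact Even.neg_one_pow ⟨n, rfl⟩
  have hval : (pcard (m + n) m n : ℤ) = ((-1 : ℤ)) ^ n * ∑ i ∈ Finset.range (n + 1), Tm m n 0 i := by
    rw [← halg, ← mul_assoc, hsq, one_mul]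
  rw [hval, Finset.mul_sum]
  rw [Finset.sum_range_succ' (fun i => ((-1 : ℤ)) ^ n * Tm m n 0 i) n]
  have h00 : ((-1 : ℤ)) ^ n * Tm m n 0 0 = 0 := by
    rw [Tm]
    have : ((0 + 0 : ℕ) : ℤ) = 0 := by norm_num
    rw [this, zero_pow (by omega)]
    ring
  rw [h00, add_zero]
  rw [← Finset.Ico_add_one_right_eq_Icc, Finset.sum_Ico_eq_sum_range]
  have hrw : n + 1 - 1 = n := by omega
  rw [hrw]
  apply Finset.sum_congr rfl
  intro i hi
  have hin : i < n := Finset.mem_range.mp hi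
  rw [Tm]
  have hd : Dh (n - (i + 1)) 0 (i + 1) = stirling n (i + 1) := by
    have := stirling_Dh (n - (i + 1)) (i + 1)
    rw [show n - (i + 1) + (i + 1) = n from by omega] at this
    exact this.symm
  have hsign : ((-1 : ℤ)) ^ n = ((-1 : ℤ)) ^ (n - (1 + i)) * ((-1 : ℤ)) ^ (1 + i) := by
    rw [← pow_add]
    congr 1
    omega
  have hsq2 : ((-1 : ℤ)) ^ (1 + i) * ((-1 : ℤ)) ^ (i + 1) = 1 := by
    rw [← pow_add]
    exact Even.neg_one_pow ⟨i + 1, by omega⟩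
  rw [hd, hsign]
  push_cast
  calc ((-1:ℤ)) ^ (n - (1 + i)) * ((-1:ℤ)) ^ (1 + i) *
        (((-1:ℤ)) ^ (i + 1) * ((0 + (i + 1))! : ℤ) * ((0 : ℤ) + (i + 1)) ^ m * (stirling n (i + 1) : ℤ))
      = (((-1:ℤ)) ^ (1 + i) * ((-1:ℤ)) ^ (i + 1)) *
        (((-1:ℤ)) ^ (n - (1 + i)) * (((1 + i))! : ℤ) * ((1 + i : ℤ)) ^ m * (stirling n (1 + i) : ℤ)) := by
        rw [show (0 + (i + 1))! = (1 + i)! from by rw [show 0 + (i + 1) = 1 + i from by omega],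
          show i + 1 = 1 + i from by omega]
        push_cast
        ring
    _ = ((-1:ℤ)) ^ (n - (1 + i)) * (((1 + i))! : ℤ) * ((1 + i : ℤ)) ^ m * (stirling n (1 + i) : ℤ) := by
        rw [hsq2]; ring
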